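/- Let (M, dist) be a metric space, let X = {x_1, …, x_n} be a finite subset of M, and let Δ > 0. Draw a uniformly random permutation π of {1, …, n} and, independently, R uniformly from the interval [Δ/4, Δ/2]. Define clusters P_1, …, P_n by P_j = (b(x_{π(j)}, R) ∩ X) \ ⋃_{i < j} b(x_{π(i)}, R), where b(y, R) is the closed ball of radius R around y. Then: (i) for every outcome and every j, the diameter of P_j is at most Δ; and (ii) for every q ∈ M and every t with 0 < t ≤ Δ/8 such that b(q, t) ∩ X ≠ ∅, letting j(π, R) = min{ i : dist(q, x_{π(i)}) ≤ R } (which exists since t < Δ/4 ≤ R), one has Pr[ b(q, t) ∩ X is not a subset of P_{j(π,R)} ] ≤ (8t/Δ) · ln( |b(q, Δ) ∩ X| ). -/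

import Mathlib

open MeasureTheory Finset

namespace RPAux

variable {n : ℕ}

noncomputable def firstIdx (π : Equiv.Perm (Fin n)) (S : Finset (Fin n)) (hS : S.Nonempty) :
    Fin n := π ((S.image (fun a => π.symm a)).min' (hS.image _))

lemma firstIdx_mem (π : Equiv.Perm (Fin n)) (S : Finset (Fin n)) (hS : S.Nonempty) :
    firstIdx π S hS ∈ S := by
  have h := (S.image (fun a => π.symm a)).min'_mem (hS.image _)
  rw [Finset.mem_image] at h
  obtain ⟨a, ha, hae⟩ := h
  unfold firstIdx
  rw [← hae, Equiv.apply_symm_apply]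
  exact ha

lemma firstIdx_min (π : Equiv.Perm (Fin n)) (S : Finset (Fin n)) (hS : S.Nonempty)
    (a : Fin n) (ha : a ∈ S) : π.symm (firstIdx π S hS) ≤ π.symm a := by
  unfold firstIdx
  rw [Equiv.symm_apply_apply]
  exact Finset.min'_le _ _ (Finset.mem_image_of_mem _ ha)

lemma firstIdx_eq (π : Equiv.Perm (Fin n)) (S : Finset (Fin n)) (hS : S.Nonempty)
    (a : Fin n) (ha : a ∈ S) (h : ∀ b ∈ S, π.symm a ≤ π.symm b) :
    firstIdx π S hS = a := by
  have h1 := firstIdx_min π S hS a ha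
  have h2 := h _ (firstIdx_mem π S hS)
  exact π.symm.injective (le_antisymm h1 h2)

lemma swap_mem {S : Finset (Fin n)} {u v : Fin n} (hu : u ∈ S) (hv : v ∈ S)
    {w : Fin n} (hw : w ∈ S) : Equiv.swap u v w ∈ S := by
  rcases eq_or_ne w u with rfl | h1
  · rwa [Equiv.swap_apply_left]
  rcases eq_or_ne w v with rfl | h2
  · rwa [Equiv.swap_apply_right]
  · rwa [Equiv.swap_apply_of_ne_of_ne h1 h2]

lemma firstIdx_swap (π : Equiv.Perm (Fin n)) (S : Finset (Fin n)) (hS : S.Nonempty)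
    {u v : Fin n} (hu : u ∈ S) (hv : v ∈ S) :
    firstIdx (Equiv.swap u v * π) S hS = Equiv.swap u v (firstIdx π S hS) := by
  apply firstIdx_eq
  · exact swap_mem hu hv (firstIdx_mem π S hS)
  · intro b hb
    have h1 : (Equiv.swap u v * π).symm (Equiv.swap u v (firstIdx π S hS))
        = π.symm (firstIdx π S hS) := by
      simp [Equiv.Perm.mul_def, Equiv.symm_trans_apply, Equiv.symm_swap,
        Equiv.swap_apply_self]
    have h2 : (Equiv.swap u v * π).symm b = π.symm (Equiv.swap u v b) := by
      simp [Equiv.Perm.mul_def, Equiv.symm_trans_apply, Equiv.symm_swap]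
    rw [h1, h2]
    exact firstIdx_min π S hS _ (swap_mem hu hv hb)

lemma card_fiber_eq (S : Finset (Fin n)) (hS : S.Nonempty) {u v : Fin n}
    (hu : u ∈ S) (hv : v ∈ S) :
    (Finset.univ.filter fun π : Equiv.Perm (Fin n) => firstIdx π S hS = u).card =
    (Finset.univ.filter fun π : Equiv.Perm (Fin n) => firstIdx π S hS = v).card := by
  apply Finset.card_bij' (i := fun π _ => Equiv.swap u v * π)
    (j := fun π _ => Equiv.swap u v * π)
  · intro π hπ
    rw [Finset.mem_filter] at hπ ⊢
    refine ⟨Finset.mem_univ _, ?_⟩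
    rw [firstIdx_swap π S hS hu hv, hπ.2, Equiv.swap_apply_left]
  · intro π hπ
    rw [Finset.mem_filter] at hπ ⊢
    refine ⟨Finset.mem_univ _, ?_⟩
    rw [firstIdx_swap π S hS hu hv, hπ.2, Equiv.swap_apply_right]
  · intro π _; rw [← mul_assoc, Equiv.swap_mul_self, one_mul]
  · intro π _; rw [← mul_assoc, Equiv.swap_mul_self, one_mul]

lemma card_fiber_mul (S : Finset (Fin n)) (hS : S.Nonempty) {u : Fin n} (hu : u ∈ S) :
    (Finset.univ.filter fun π : Equiv.Perm (Fin n) => firstIdx π S hS = u).card * S.card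
      = Fintype.card (Equiv.Perm (Fin n)) := by
  have key : (Finset.univ : Finset (Equiv.Perm (Fin n))).card
      = ∑ v ∈ S, (Finset.univ.filter fun π : Equiv.Perm (Fin n) => firstIdx π S hS = v).card :=
    Finset.card_eq_sum_card_fiberwise (fun π _ => firstIdx_mem π S hS)
  rw [Fintype.card, key]
  rw [Finset.sum_congr rfl (fun v hv => card_fiber_eq S hS hv hu), Finset.sum_const,
    smul_eq_mul, mul_comm]

lemma harmonic_le_log (m : ℕ) : ∑ k ∈ Finset.Ioc 1 m, (1 / (k : ℝ)) ≤ Real.log m := by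
  induction m with
  | zero => simp
  | succ m ih =>
    rcases Nat.lt_or_ge m 1 with hm | hm
    · interval_cases m <;> simp
    · rw [Finset.sum_Ioc_succ_top (by omega)]
      have hlog : Real.log m + 1 / (m + 1 : ℝ) ≤ Real.log (m + 1) := by
        have hm0 : (0:ℝ) < m := by exact_mod_cast hm
        have h1 : Real.log ((m : ℝ) / (m + 1)) ≤ (m : ℝ) / (m + 1) - 1 :=
          Real.log_le_sub_one_of_pos (by positivity)
        rw [Real.log_div (by positivity) (by positivity)] at h1
        have h2 : (m : ℝ) / (m + 1) - 1 = -(1 / (m + 1)) := by field_simp; ring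
        rw [h2] at h1
        linarith
      push_cast
      push_cast at ih
      linarith

lemma uniform_toMeasure_finset {α : Type*} [Fintype α] [Nonempty α] (s : Finset α) :
    @PMF.toMeasure α ⊤ (PMF.uniformOfFintype α) ↑s
      = (s.card : ENNReal) * (Fintype.card α : ENNReal)⁻¹ := by
  classical
  rw [@PMF.toMeasure_apply α ⊤ _ _ MeasurableSpace.measurableSet_top, tsum_fintype]
  have : ∀ a : α, (↑s : Set α).indicator (⇑(PMF.uniformOfFintype α)) a
      = if a ∈ s then (Fintype.card α : ENNReal)⁻¹ else 0 := by
    intro a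
    rw [Set.indicator_apply]
    simp [PMF.uniformOfFintype_apply]
  rw [Finset.sum_congr rfl (fun a _ => this a), Finset.sum_ite_mem, Finset.univ_inter,
    Finset.sum_const, nsmul_eq_mul]

lemma measE (n : ℕ) (dq : Fin n → ℝ) (dB : Fin n → Fin n → ℝ) (bb : Fin n → Prop) :
    MeasurableSet {R : ℝ | ∃ j : Fin n, ((dq j ≤ R ∧ ∀ i, i < j → ¬ dq i ≤ R) ∧
      ∃ i : Fin n, bb i ∧ ¬ (dB i j ≤ R ∧ ∀ i', i' < j → ¬ dB i i' ≤ R))} := by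
  classical
  have : {R : ℝ | ∃ j : Fin n, ((dq j ≤ R ∧ ∀ i, i < j → ¬ dq i ≤ R) ∧
      ∃ i : Fin n, bb i ∧ ¬ (dB i j ≤ R ∧ ∀ i', i' < j → ¬ dB i i' ≤ R))}
      = ⋃ j : Fin n, ((Set.Ici (dq j) ∩ ⋂ i : Fin n, ⋂ _ : i < j, (Set.Ici (dq i))ᶜ) ∩
          ⋃ i : Fin n, ⋃ _ : bb i,
            (Set.Ici (dB i j) ∩ ⋂ i' : Fin n, ⋂ _ : i' < j, (Set.Ici (dB i i'))ᶜ)ᶜ) := by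
    ext R
    simp only [Set.mem_setOf_eq, Set.mem_iUnion, Set.mem_inter_iff, Set.mem_iInter,
      Set.mem_compl_iff, Set.mem_Ici, exists_prop]
  rw [this]
  refine MeasurableSet.iUnion fun j => MeasurableSet.inter
    (MeasurableSet.inter measurableSet_Ici
      (MeasurableSet.iInter fun i => MeasurableSet.iInter fun _ =>
        measurableSet_Ici.compl)) ?_
  refine MeasurableSet.iUnion fun i => MeasurableSet.iUnion fun _ =>
    (MeasurableSet.inter measurableSet_Ici
      (MeasurableSet.iInter fun i' => MeasurableSet.iInter fun _ =>
        measurableSet_Ici.compl)).compl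

end RPAux

open RPAux

/-- **Lemma on random partitions.** Let `X = {x 0, …, x (n-1)}`
be a finite subset of a metric space `M` and `Δ > 0`.  Draw a uniformly random
permutation `π` of the indices and, independently, `R` uniformly from
`[Δ/4, Δ/2]`, and define the clusters
`P j = (b(x (π j), R) ∩ X) \ ⋃_{i < j} b(x (π i), R)`.
Then (i) every cluster has diameter at most `Δ`, and (ii) for every `q ∈ M`
and `0 < t ≤ Δ/8` with `b(q, t) ∩ X ≠ ∅`, letting `j` be the first index with
`dist(q, x (π j)) ≤ R`, the probability that `b(q, t) ∩ X` is not contained in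
the cluster `P j` is at most `(8t/Δ) · ln |b(q, Δ) ∩ X|`. -/
theorem random_partition_properties {M : Type*} [MetricSpace M]
    (n : ℕ) (x : Fin n → M) (hx : Function.Injective x) (Δ : ℝ) (hΔ : 0 < Δ) :
    letI : MeasurableSpace (Equiv.Perm (Fin n)) := ⊤
    let P : Equiv.Perm (Fin n) → ℝ → Fin n → Set M := fun π R j =>
      (Metric.closedBall (x (π j)) R ∩ Set.range x) \
        ⋃ i ∈ {i : Fin n | i < j}, Metric.closedBall (x (π i)) R
    let μ : Measure (Equiv.Perm (Fin n) × ℝ) :=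
      (PMF.uniformOfFintype (Equiv.Perm (Fin n))).toMeasure.prod
        ((volume (Set.Icc (Δ / 4) (Δ / 2)))⁻¹ •
          volume.restrict (Set.Icc (Δ / 4) (Δ / 2)))
    (∀ (π : Equiv.Perm (Fin n)), ∀ R ∈ Set.Icc (Δ / 4) (Δ / 2), ∀ j : Fin n,
        ∀ a ∈ P π R j, ∀ b ∈ P π R j, dist a b ≤ Δ) ∧
    (∀ (q : M) (t : ℝ), 0 < t → t ≤ Δ / 8 →
        (Metric.closedBall q t ∩ Set.range x).Nonempty →
        μ {ω : Equiv.Perm (Fin n) × ℝ |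
            ∃ j : Fin n,
              (dist q (x (ω.1 j)) ≤ ω.2 ∧
                ∀ i : Fin n, i < j → ¬ dist q (x (ω.1 i)) ≤ ω.2) ∧
              ¬ Metric.closedBall q t ∩ Set.range x ⊆ P ω.1 ω.2 j} ≤
          ENNReal.ofReal (8 * t / Δ *
            Real.log (Nat.card ↥(Metric.closedBall q Δ ∩ Set.range x)))) := by
  classical
  intro P μ
  letI : MeasurableSpace (Equiv.Perm (Fin n)) := ⊤
  haveI : MeasurableSingletonClass (Equiv.Perm (Fin n)) :=
    ⟨fun _ => MeasurableSpace.measurableSet_top⟩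
  constructor
  · -- part (i)
    intro π R hR j a ha b hb
    have h1 : dist a (x (π j)) ≤ R := ha.1.1
    have h2 : dist b (x (π j)) ≤ R := hb.1.1
    have h3 := dist_triangle a (x (π j)) b
    rw [dist_comm (x (π j)) b] at h3
    have hR2 : R ≤ Δ / 2 := hR.2
    linarith
  · -- part (ii)
    intro q t ht htΔ hne
    -- basic setup
    set ν : Measure ℝ := (volume (Set.Icc (Δ / 4) (Δ / 2)))⁻¹ •
      volume.restrict (Set.Icc (Δ / 4) (Δ / 2)) with hν
    set Pm : Measure (Equiv.Perm (Fin n)) := (PMF.uniformOfFintype (Equiv.Perm (Fin n))).toMeasure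
      with hPm
    obtain ⟨y₀, hy₀⟩ := hne
    obtain ⟨i₀, rfl⟩ := hy₀.2
    have hi₀t : dist (x i₀) q ≤ t := Metric.mem_closedBall.mp hy₀.1
    set d : Fin n → ℝ := fun i => dist q (x i) with hdd
    have hdi₀ : d i₀ ≤ t := by rw [hdd]; simpa [dist_comm] using hi₀t
    set cP : ℕ := Fintype.card (Equiv.Perm (Fin n)) with hcP
    set Cf : ℝ → Finset (Fin n) := fun R => Finset.univ.filter (fun i => d i ≤ R - t) with hCf
    set Sf : ℝ → Finset (Fin n) := fun R => Finset.univ.filter (fun i => d i ≤ R + t) with hSf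
    set Df : ℝ → Finset (Fin n) := fun R => (Sf R).filter (fun i => ¬ d i ≤ R - t) with hDf
    set m : ℕ := (Finset.univ.filter (fun i => d i ≤ Δ)).card with hmm
    set A : ℕ → Set ℝ := fun k =>
      {R | R ∈ Set.Icc (Δ/4) (Δ/2) ∧ ((Cf R).card < k ∧ k ≤ (Sf R).card)} with hA
    set J : ℕ → Set ℝ := fun k =>
      if h : (A k).Nonempty then Set.Icc (sInf (A k)) (sInf (A k) + 2*t) else ∅ with hJ
    set Esec : Equiv.Perm (Fin n) → Set ℝ := fun π =>
      {R | ∃ j : Fin n, ((dist q (x (π j)) ≤ R ∧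
        ∀ i : Fin n, i < j → ¬ dist q (x (π i)) ≤ R) ∧
        ¬ Metric.closedBall q t ∩ Set.range x ⊆ P π R j)} with hEsec
    -- membership in clusters, concretely
    have hmemP : ∀ (π : Equiv.Perm (Fin n)) (R : ℝ) (jj : Fin n) (i : Fin n),
        x i ∈ P π R jj ↔ (dist (x i) (x (π jj)) ≤ R ∧
          ∀ i' : Fin n, i' < jj → ¬ dist (x i) (x (π i')) ≤ R) := by
      intro π R jj i
      constructor
      · intro h
        refine ⟨h.1.1, ?_⟩
        intro i' hi' hle
        exact h.2 (Set.mem_biUnion hi' hle)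
      · intro h
        refine ⟨⟨h.1, Set.mem_range_self i⟩, ?_⟩
        intro hmem'
        obtain ⟨i', hi', hle⟩ := Set.mem_iUnion₂.mp hmem'
        exact h.2 i' hi' hle
    have hsubs : ∀ (π : Equiv.Perm (Fin n)) (R : ℝ) (jj : Fin n),
        (Metric.closedBall q t ∩ Set.range x ⊆ P π R jj) ↔
          ∀ i : Fin n, dist (x i) q ≤ t → x i ∈ P π R jj := by
      intro π R jj
      constructor
      · intro h i hit
        exact h ⟨Metric.mem_closedBall.mpr hit, Set.mem_range_self i⟩
      · intro h y hy
        obtain ⟨i, rfl⟩ := hy.2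
        exact h i (Metric.mem_closedBall.mp hy.1)
    -- the section sets, in purely logical form
    have hEseceq : ∀ π, Esec π = {R : ℝ | ∃ j : Fin n,
        ((dist q (x (π j)) ≤ R ∧ ∀ i, i < j → ¬ dist q (x (π i)) ≤ R) ∧
        ∃ i : Fin n, dist (x i) q ≤ t ∧ ¬ (dist (x i) (x (π j)) ≤ R ∧
          ∀ i', i' < j → ¬ dist (x i) (x (π i')) ≤ R))} := by
      intro π
      ext R
      simp only [hEsec, Set.mem_setOf_eq]
      constructor
      · rintro ⟨j, hj1, hj2⟩
        refine ⟨j, hj1, ?_⟩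
        rw [hsubs] at hj2
        push_neg at hj2
        obtain ⟨i, hit, hP⟩ := hj2
        exact ⟨i, hit, fun hc => hP ((hmemP π R j i).mpr hc)⟩
      · rintro ⟨j, hj1, i, hit, hnc⟩
        refine ⟨j, hj1, fun hsub => ?_⟩
        exact hnc ((hmemP π R j i).mp
          (hsub ⟨Metric.mem_closedBall.mpr hit, Set.mem_range_self i⟩))
    have hEsecMeas : ∀ π, MeasurableSet (Esec π) := by
      intro π
      rw [hEseceq π]
      exact measE n (fun j => dist q (x (π j))) (fun i j => dist (x i) (x (π j)))
        (fun i => dist (x i) q ≤ t)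
    -- the event as a union of rectangles
    have hgoalset : {ω : Equiv.Perm (Fin n) × ℝ |
            ∃ j : Fin n,
              (dist q (x (ω.1 j)) ≤ ω.2 ∧
                ∀ i : Fin n, i < j → ¬ dist q (x (ω.1 i)) ≤ ω.2) ∧
              ¬ Metric.closedBall q t ∩ Set.range x ⊆ P ω.1 ω.2 j}
        = ⋃ π : Equiv.Perm (Fin n), {π} ×ˢ Esec π := by
      ext ⟨π, R⟩
      simp only [Set.mem_setOf_eq, Set.mem_iUnion, Set.mem_prod, Set.mem_singleton_iff,
        hEsec, exists_eq_left']
    -- geometric key: on the event, the first point of Sf R is in Df R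
    have hinc : ∀ R ∈ Set.Icc (Δ/4) (Δ/2), ∀ (hSne : (Sf R).Nonempty),
        ∀ π : Equiv.Perm (Fin n), R ∈ Esec π → firstIdx π (Sf R) hSne ∈ Df R := by
      intro R hR hSne π hmem
      obtain ⟨j, ⟨hj1, hj2⟩, hj3⟩ := hmem
      have htR : t ≤ R - t := by have := hR.1; linarith
      set RelF : Finset (Fin n) := Finset.univ.filter
        (fun a => d a ≤ R ∨ ∃ i : Fin n, dist (x i) q ≤ t ∧ dist (x i) (x a) ≤ R) with hRelF
      have hCRel : Cf R ⊆ RelF := by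
        intro a ha
        simp only [hCf, Finset.mem_filter] at ha
        simp only [hRelF, Finset.mem_filter]
        exact ⟨Finset.mem_univ _, Or.inl (by linarith [ha.2])⟩
      have hRelS : RelF ⊆ Sf R := by
        intro a ha
        simp only [hRelF, Finset.mem_filter] at ha
        simp only [hSf, Finset.mem_filter]
        refine ⟨Finset.mem_univ _, ?_⟩
        rcases ha.2 with h | ⟨i, hit, hia⟩
        · linarith
        · have h1 : dist q (x a) ≤ dist q (x i) + dist (x i) (x a) := dist_triangle q (x i) (x a)
          have h2 : dist q (x i) ≤ t := by rwa [dist_comm]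
          have h3 : d a = dist q (x a) := rfl
          linarith
      have hi₀Rel : i₀ ∈ RelF := by
        simp only [hRelF, Finset.mem_filter]
        exact ⟨Finset.mem_univ _, Or.inl (by linarith)⟩
      have hRelne : RelF.Nonempty := ⟨i₀, hi₀Rel⟩
      have huRel : firstIdx π RelF hRelne ∈ RelF := firstIdx_mem _ _ _
      set u : Fin n := firstIdx π RelF hRelne with hu
      have humin := firstIdx_min π RelF hRelne
      have hud : ¬ d u ≤ R - t := by
        intro hdu
        have hduR : dist q (x u) ≤ R - t := hdu
        have hqu : dist q (x (π (π.symm u))) ≤ R := by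
          rw [Equiv.apply_symm_apply]
          linarith
        have hj_eq : j = π.symm u := by
          rcases lt_trichotomy j (π.symm u) with hlt | heq | hgt
          · have hπj : π j ∈ RelF := by
              simp only [hRelF, Finset.mem_filter]
              exact ⟨Finset.mem_univ _, Or.inl hj1⟩
            have hle := humin _ hπj
            rw [Equiv.symm_apply_apply] at hle
            exact absurd (lt_of_le_of_lt hle hlt) (lt_irrefl _)
          · exact heq
          · exact absurd hqu (hj2 _ hgt)
        apply hj3
        rw [hsubs]
        intro i hit
        rw [hmemP]
        constructor
        · rw [hj_eq, Equiv.apply_symm_apply]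
          have h6 := dist_triangle (x i) q (x u)
          linarith
        · intro i' hi' hle
          have hπi' : π i' ∈ RelF := by
            simp only [hRelF, Finset.mem_filter]
            exact ⟨Finset.mem_univ _, Or.inr ⟨i, hit, hle⟩⟩
          have h7 := humin _ hπi'
          rw [Equiv.symm_apply_apply] at h7
          rw [hj_eq] at hi'
          exact absurd (lt_of_le_of_lt h7 hi') (lt_irrefl _)
      have hwS : firstIdx π (Sf R) hSne ∈ Sf R := firstIdx_mem _ _ _
      have hwD : ¬ d (firstIdx π (Sf R) hSne) ≤ R - t := by
        intro hdw
        have hwC : firstIdx π (Sf R) hSne ∈ Cf R := by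
          simp only [hCf, Finset.mem_filter]
          exact ⟨Finset.mem_univ _, hdw⟩
        have h1 : π.symm (firstIdx π (Sf R) hSne) ≤ π.symm u :=
          firstIdx_min π (Sf R) hSne u (hRelS huRel)
        have h2 : π.symm u ≤ π.symm (firstIdx π (Sf R) hSne) := humin _ (hCRel hwC)
        have heq : firstIdx π (Sf R) hSne = u := π.symm.injective (le_antisymm h1 h2)
        rw [heq] at hdw
        exact hud hdw
      simp only [hDf, Finset.mem_filter]
      exact ⟨hwS, hwD⟩
    -- the interval sets J k capture A k
    have hAJ : ∀ k, A k ⊆ J k := by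
      intro k R hR
      have hne' : (A k).Nonempty := ⟨R, hR⟩
      have hbdd : BddBelow (A k) := by
        refine ⟨Δ/4, fun z hz => ?_⟩
        have : z ∈ Set.Icc (Δ/4) (Δ/2) := hz.1
        exact this.1
      have hpair : ∀ z w, z ∈ A k → w ∈ A k → w ≤ z + 2*t := by
        intro z w hz hw
        by_contra hcon
        push_neg at hcon
        have hsub2 : Sf z ⊆ Cf w := by
          intro i hi
          simp only [hSf, Finset.mem_filter] at hi
          simp only [hCf, Finset.mem_filter]
          exact ⟨Finset.mem_univ _, by linarith [hi.2]⟩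
        have hcard := Finset.card_le_card hsub2
        have hz2 := hz.2.2
        have hw2 := hw.2.1
        omega
      simp only [hJ]
      rw [dif_pos hne']
      constructor
      · exact csInf_le hbdd hR
      · have hlb : ∀ z ∈ A k, R - 2*t ≤ z := by
          intro z hz
          have := hpair z R hz hR
          linarith
        have := le_csInf hne' hlb
        linarith
    have hJmeas : ∀ k, MeasurableSet (J k) := by
      intro k
      simp only [hJ]
      by_cases h : (A k).Nonempty
      · rw [dif_pos h]; exact measurableSet_Icc
      · rw [dif_neg h]; exact MeasurableSet.empty
    have hνJ : ∀ k, ν (J k) ≤ ENNReal.ofReal (8 * t / Δ) := by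
      intro k
      have hvol : volume (J k) ≤ ENNReal.ofReal (2*t) := by
        simp only [hJ]
        by_cases h : (A k).Nonempty
        · rw [dif_pos h, Real.volume_Icc]
          exact le_of_eq (by norm_num)
        · rw [dif_neg h]; simp
      have hν1 : ν (J k) = (volume (Set.Icc (Δ/4) (Δ/2)))⁻¹ *
          volume (J k ∩ Set.Icc (Δ/4) (Δ/2)) := by
        rw [hν, Measure.smul_apply, Measure.restrict_apply (hJmeas k)]
        rfl
      rw [hν1]
      have hIccvol : volume (Set.Icc (Δ/4 : ℝ) (Δ/2)) = ENNReal.ofReal (Δ/4) := by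
        rw [Real.volume_Icc]
        congr 1
        ring
      rw [hIccvol]
      calc (ENNReal.ofReal (Δ/4))⁻¹ * volume (J k ∩ Set.Icc (Δ/4) (Δ/2))
          ≤ (ENNReal.ofReal (Δ/4))⁻¹ * ENNReal.ofReal (2*t) :=
            mul_le_mul_right (le_trans (measure_mono Set.inter_subset_left) hvol) _
        _ = ENNReal.ofReal (2*t) / ENNReal.ofReal (Δ/4) := by
            rw [ENNReal.div_eq_inv_mul]
        _ = ENNReal.ofReal (2*t / (Δ/4)) := (ENNReal.ofReal_div_of_pos (by linarith)).symm
        _ = ENNReal.ofReal (8 * t / Δ) := by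
            congr 1
            field_simp
            ring
    -- pointwise bound
    have hpt : ∀ R ∈ Set.Icc (Δ/4) (Δ/2),
        (∑ π : Equiv.Perm (Fin n), (Esec π).indicator (1 : ℝ → ENNReal) R) ≤
        ∑ k ∈ Finset.Ioc 1 m, (cP : ENNReal) * (k : ENNReal)⁻¹ * (J k).indicator 1 R := by
      intro R hR
      have htR : t ≤ R - t := by have := hR.1; linarith
      have hCS : Cf R ⊆ Sf R := by
        intro i hi
        simp only [hCf, Finset.mem_filter] at hi
        simp only [hSf, Finset.mem_filter]
        exact ⟨Finset.mem_univ _, by linarith [hi.2]⟩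
      have hi₀C : i₀ ∈ Cf R := by
        simp only [hCf, Finset.mem_filter]
        exact ⟨Finset.mem_univ _, by linarith⟩
      have hSne : (Sf R).Nonempty := ⟨i₀, hCS hi₀C⟩
      have hc1 : 1 ≤ (Cf R).card := Finset.card_pos.mpr ⟨i₀, hi₀C⟩
      have heSm : (Sf R).card ≤ m := by
        apply Finset.card_le_card
        intro i hi
        simp only [hSf, Finset.mem_filter] at hi
        simp only [hmm, Finset.mem_filter]
        refine ⟨Finset.mem_univ _, ?_⟩
        have hR2 := hR.2
        linarith [hi.2]
      have hcard_le : (Cf R).card + (Df R).card = (Sf R).card := by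
        have h1 : (Sf R).filter (fun i => d i ≤ R - t) = Cf R := by
          ext i
          simp only [hSf, hCf, Finset.mem_filter, Finset.mem_univ, true_and]
          constructor
          · rintro ⟨_, h⟩; exact h
          · intro h; exact ⟨by linarith, h⟩
        conv_lhs => rw [← h1]
        simp only [hDf]
        exact Finset.card_filter_add_card_filter_not _
      have hLHS : (∑ π : Equiv.Perm (Fin n), (Esec π).indicator (1 : ℝ → ENNReal) R)
          = ((Finset.univ.filter (fun π : Equiv.Perm (Fin n) => R ∈ Esec π)).card : ENNReal) := by
        rw [Finset.card_filter]
        push_cast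
        apply Finset.sum_congr rfl
        intro π _
        rw [Set.indicator_apply]
        split_ifs <;> simp
      rw [hLHS]
      have hsub2 : Finset.univ.filter (fun π : Equiv.Perm (Fin n) => R ∈ Esec π)
          ⊆ Finset.univ.filter (fun π => firstIdx π (Sf R) hSne ∈ Df R) := by
        intro π hπ
        simp only [Finset.mem_filter] at hπ ⊢
        exact ⟨Finset.mem_univ _, hinc R hR hSne π hπ.2⟩
      have hmono : ((Finset.univ.filter (fun π : Equiv.Perm (Fin n) => R ∈ Esec π)).card : ENNReal)
          ≤ ((Finset.univ.filter (fun π : Equiv.Perm (Fin n) =>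
              firstIdx π (Sf R) hSne ∈ Df R)).card : ENNReal) := by
        exact_mod_cast Finset.card_le_card hsub2
      refine le_trans hmono ?_
      have hfibN : (Finset.univ.filter (fun π : Equiv.Perm (Fin n) =>
            firstIdx π (Sf R) hSne ∈ Df R)).card
          = ∑ u ∈ Df R, (Finset.univ.filter (fun π : Equiv.Perm (Fin n) =>
              firstIdx π (Sf R) hSne = u)).card := by
        rw [Finset.card_eq_sum_card_fiberwise
          (s := Finset.univ.filter (fun π => firstIdx π (Sf R) hSne ∈ Df R))
          (f := fun π => firstIdx π (Sf R) hSne) (t := Df R)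
          (fun π hπ => (Finset.mem_filter.mp (Finset.mem_coe.mp hπ)).2)]
        refine Finset.sum_congr rfl fun u hu => ?_
        congr 1
        ext π
        simp only [Finset.mem_filter, Finset.mem_univ, true_and]
        constructor
        · rintro ⟨_, h⟩; exact h
        · intro h; exact ⟨h ▸ hu, h⟩
      rw [hfibN]
      push_cast
      have hfibval : ∀ u ∈ Df R, ((Finset.univ.filter (fun π : Equiv.Perm (Fin n) =>
            firstIdx π (Sf R) hSne = u)).card : ENNReal)
          = (cP : ENNReal) / ((Sf R).card : ENNReal) := by
        intro u hu
        have huS : u ∈ Sf R := by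
          simp only [hDf, Finset.mem_filter] at hu
          exact hu.1
        have hmulEq := card_fiber_mul (Sf R) hSne huS
        rw [ENNReal.eq_div_iff (by exact_mod_cast Finset.card_ne_zero.mpr hSne)
          (ENNReal.natCast_ne_top _)]
        rw [mul_comm]
        exact_mod_cast hmulEq
      rw [Finset.sum_congr rfl hfibval, Finset.sum_const, nsmul_eq_mul]
      have key : ((Df R).card : ENNReal) * ((cP : ENNReal) / ((Sf R).card : ENNReal))
          = ∑ _k ∈ Finset.Ioc (Cf R).card (Sf R).card,
              (cP : ENNReal) / ((Sf R).card : ENNReal) := by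
        rw [Finset.sum_const, nsmul_eq_mul, Nat.card_Ioc]
        congr 2
        omega
      rw [key]
      refine le_trans (Finset.sum_le_sum (fun k hk => ?_))
        (Finset.sum_le_sum_of_subset (Finset.Ioc_subset_Ioc hc1 heSm))
      obtain ⟨hkc, hke⟩ := Finset.mem_Ioc.mp hk
      have hind : (J k).indicator (1 : ℝ → ENNReal) R = 1 := by
        have hRA : R ∈ A k := by
          simp only [hA, Set.mem_setOf_eq]
          exact ⟨hR, hkc, hke⟩
        rw [Set.indicator_of_mem (hAJ k hRA)]
        rfl
      rw [hind, mul_one, div_eq_mul_inv]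
      exact mul_le_mul_right (ENNReal.inv_le_inv.mpr (by exact_mod_cast hke)) _
    -- identification of the cardinality
    -- identification of the cardinality
    have hmcard : Nat.card ↥(Metric.closedBall q Δ ∩ Set.range x) = m := by
      have hseteq : Metric.closedBall q Δ ∩ Set.range x = x '' {i : Fin n | d i ≤ Δ} := by
        ext y
        simp only [Set.mem_inter_iff, Metric.mem_closedBall, Set.mem_range,
          Set.mem_image, Set.mem_setOf_eq]
        constructor
        · rintro ⟨hy, i, rfl⟩
          refine ⟨i, ?_, rfl⟩
          show dist q (x i) ≤ Δ
          rwa [dist_comm]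
        · rintro ⟨i, hi, rfl⟩
          have hi' : dist q (x i) ≤ Δ := hi
          exact ⟨by rwa [dist_comm] at hi', ⟨i, rfl⟩⟩
      rw [hseteq, Nat.card_coe_set_eq, Set.ncard_image_of_injective _ hx]
      have hst : {i : Fin n | d i ≤ Δ} = ↑(Finset.univ.filter (fun i => d i ≤ Δ)) := by
        ext i; simp
      rw [hst, Set.ncard_coe_finset]
    -- assembling
    rw [hgoalset, hmcard]
    have hEvMeas : MeasurableSet (⋃ π : Equiv.Perm (Fin n), {π} ×ˢ Esec π) :=
      MeasurableSet.iUnion fun π =>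
        (MeasurableSpace.measurableSet_top).prod (hEsecMeas π)
    haveI hsf : SFinite ν := by rw [hν]; infer_instance
    have hsec : ∀ π : Equiv.Perm (Fin n),
        (Prod.mk π ⁻¹' ⋃ π' : Equiv.Perm (Fin n), {π'} ×ˢ Esec π') = Esec π := by
      intro π
      ext R
      simp only [Set.mem_preimage, Set.mem_iUnion, Set.mem_prod, Set.mem_singleton_iff]
      constructor
      · rintro ⟨π', hπ', hR⟩
        rw [hπ']
        exact hR
      · intro hR
        exact ⟨π, rfl, hR⟩
    have step1 : μ (⋃ π : Equiv.Perm (Fin n), {π} ×ˢ Esec π)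
        = ∑ π : Equiv.Perm (Fin n), ν (Esec π) * Pm {π} := by
      show (Pm.prod ν) _ = _
      rw [Measure.prod_apply hEvMeas, lintegral_fintype]
      exact Finset.sum_congr rfl fun π _ => by rw [hsec π]
    have hcP0 : (cP : ENNReal) ≠ 0 := by
      simp only [hcP]
      exact_mod_cast Nat.cast_ne_zero.mpr Fintype.card_ne_zero
    have hcPtop : (cP : ENNReal) ≠ ⊤ := ENNReal.natCast_ne_top _
    have hPmsingle : ∀ π : Equiv.Perm (Fin n), Pm {π} = (cP : ENNReal)⁻¹ := by
      intro π
      rw [hPm, PMF.toMeasure_apply_singleton _ _ MeasurableSpace.measurableSet_top]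
      rw [PMF.uniformOfFintype_apply]
    have hae : ∀ᵐ R ∂ν, R ∈ Set.Icc (Δ/4) (Δ/2) := by
      rw [ae_iff]
      have hcompl : {R : ℝ | ¬ R ∈ Set.Icc (Δ/4) (Δ/2)} = (Set.Icc (Δ/4) (Δ/2))ᶜ := rfl
      rw [hcompl, hν, Measure.smul_apply, Measure.restrict_apply measurableSet_Icc.compl]
      simp
    have step3 : ∑ π : Equiv.Perm (Fin n), ν (Esec π)
        ≤ ∑ k ∈ Finset.Ioc 1 m, (cP : ENNReal) * (k : ENNReal)⁻¹ * ν (J k) := by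
      have e1 : ∑ π : Equiv.Perm (Fin n), ν (Esec π)
          = ∫⁻ R, (∑ π : Equiv.Perm (Fin n), (Esec π).indicator 1 R) ∂ν := by
        rw [lintegral_finset_sum _ (fun π _ => (measurable_one.indicator (hEsecMeas π)))]
        exact Finset.sum_congr rfl fun π _ => (lintegral_indicator_one (hEsecMeas π)).symm
      have e2 : (∫⁻ R, (∑ π : Equiv.Perm (Fin n), (Esec π).indicator 1 R) ∂ν)
          ≤ ∫⁻ R, (∑ k ∈ Finset.Ioc 1 m,
              (cP : ENNReal) * (k : ENNReal)⁻¹ * (J k).indicator 1 R) ∂ν :=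
        lintegral_mono_ae (hae.mono fun R hRIcc => hpt R hRIcc)
      have e3 : (∫⁻ R, (∑ k ∈ Finset.Ioc 1 m,
              (cP : ENNReal) * (k : ENNReal)⁻¹ * (J k).indicator 1 R) ∂ν)
          = ∑ k ∈ Finset.Ioc 1 m, (cP : ENNReal) * (k : ENNReal)⁻¹ * ν (J k) := by
        rw [lintegral_finset_sum _
          (fun k _ => ((measurable_one.indicator (hJmeas k)).const_mul _))]
        refine Finset.sum_congr rfl fun k _ => ?_
        rw [lintegral_const_mul _ (measurable_one.indicator (hJmeas k)),
          lintegral_indicator_one (hJmeas k)]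
      rw [e1]
      exact le_trans e2 (le_of_eq e3)
    have hharm : ∑ k ∈ Finset.Ioc 1 m, (k : ENNReal)⁻¹
        ≤ ENNReal.ofReal (Real.log m) := by
      have h1 : ∀ k ∈ Finset.Ioc 1 m, (k : ENNReal)⁻¹ = ENNReal.ofReal (1/(k:ℝ)) := by
        intro k hk
        have hk1 : 1 < k := (Finset.mem_Ioc.mp hk).1
        have hk0 : (0:ℝ) < k := by exact_mod_cast Nat.lt_of_lt_of_le Nat.zero_lt_one hk1.le
        rw [one_div, ENNReal.ofReal_inv_of_pos hk0, ENNReal.ofReal_natCast]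
      rw [Finset.sum_congr rfl h1, ← ENNReal.ofReal_sum_of_nonneg
        (fun k _ => by positivity)]
      exact ENNReal.ofReal_le_ofReal (harmonic_le_log m)
    calc μ (⋃ π : Equiv.Perm (Fin n), {π} ×ˢ Esec π)
        = ∑ π : Equiv.Perm (Fin n), ν (Esec π) * Pm {π} := step1
      _ = (∑ π : Equiv.Perm (Fin n), ν (Esec π)) * (cP : ENNReal)⁻¹ := by
          have hco : ∀ π ∈ Finset.univ, ν (Esec π) * Pm {π}
              = ν (Esec π) * (cP : ENNReal)⁻¹ := fun π _ => by rw [hPmsingle π]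
          rw [Finset.sum_congr rfl hco, ← Finset.sum_mul]
      _ ≤ (∑ k ∈ Finset.Ioc 1 m, (cP : ENNReal) * (k : ENNReal)⁻¹ * ν (J k))
            * (cP : ENNReal)⁻¹ := mul_le_mul_left step3 _
      _ ≤ (∑ k ∈ Finset.Ioc 1 m, (cP : ENNReal) * (k : ENNReal)⁻¹
            * ENNReal.ofReal (8 * t / Δ)) * (cP : ENNReal)⁻¹ :=
          mul_le_mul_left (Finset.sum_le_sum fun k _ => mul_le_mul_right (hνJ k) _) _
      _ = ((cP : ENNReal) * ∑ k ∈ Finset.Ioc 1 m, (k : ENNReal)⁻¹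
            * ENNReal.ofReal (8 * t / Δ)) * (cP : ENNReal)⁻¹ := by
          rw [Finset.mul_sum]
          congr 1
          exact Finset.sum_congr rfl fun k _ => (mul_assoc _ _ _)
      _ = (∑ k ∈ Finset.Ioc 1 m, (k : ENNReal)⁻¹ * ENNReal.ofReal (8 * t / Δ))
            * ((cP : ENNReal) * (cP : ENNReal)⁻¹) := by ring
      _ = ∑ k ∈ Finset.Ioc 1 m, (k : ENNReal)⁻¹ * ENNReal.ofReal (8 * t / Δ) := by
          rw [ENNReal.mul_inv_cancel hcP0 hcPtop, mul_one]
      _ = (∑ k ∈ Finset.Ioc 1 m, (k : ENNReal)⁻¹) * ENNReal.ofReal (8 * t / Δ) := by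
          rw [Finset.sum_mul]
      _ ≤ ENNReal.ofReal (Real.log m) * ENNReal.ofReal (8 * t / Δ) :=
          mul_le_mul_left hharm _
      _ = ENNReal.ofReal (8 * t / Δ * Real.log m) := by
          rw [mul_comm (ENNReal.ofReal (Real.log m)),
            ← ENNReal.ofReal_mul (div_nonneg (by linarith) hΔ.le)]
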